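/- Let $K \geq 1$ and let real numbers $q$, $q_r$ ($1 \le r \le K$), and $q_{ut}$ ($1 \le u,t \le K$) satisfy $q_{ut} = q_{tu}$ for all $u,t$. Suppose that for every probability vector $(p_1,\ldots,p_K)$ in the $K$-simplex and every $s \in \{1,\ldots,K\}$, $q \cdot p_s + \sum_{r=1}^{K} q_r p_s(\delta_{sr} - p_r) + \sum_{u,t=1}^{K} q_{ut} p_s [(\delta_{su} - p_u)(\delta_{st} - p_t) - p_u(\delta_{ut} - p_t)] = 0$, where $\delta$ is the Kronecker delta. Then $q = 0$, $q_r = q_s$ for all $1 \le r,s \le K$, and $2q_{uv} = q_{uu} + q_{vv}$ for all $1 \le u,v \le K$. -/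
import Mathlib


/-- Kronecker delta. -/
noncomputable def kdelta {K : ℕ} (s r : Fin K) : ℝ := if s = r then 1 else 0

lemma kd_ne {K : ℕ} (u i : Fin K) (h : u ≠ i) : kdelta u i = 0 := by
  simp [kdelta, h]

lemma kd_eq {K : ℕ} (u : Fin K) : kdelta u u = 1 := by simp [kdelta]

lemma sum_two {K : ℕ} (a b : Fin K) (hab : a ≠ b) (f : Fin K → ℝ)
    (h : ∀ i, i ≠ a → i ≠ b → f i = 0) : ∑ i, f i = f a + f b := by
  rw [← Finset.sum_pair hab]
  refine (Finset.sum_subset (Finset.subset_univ _) ?_).symm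
  intro i _ hi
  simp only [Finset.mem_insert, Finset.mem_singleton, not_or] at hi
  exact h i hi.1 hi.2

lemma qzero (K : ℕ) (hK : 1 ≤ K)
    (q : ℝ) (qr : Fin K → ℝ) (Q : Fin K → Fin K → ℝ)
    (hid : ∀ p : Fin K → ℝ, (∀ i, 0 ≤ p i) → (∑ i, p i) = 1 →
      ∀ s : Fin K,
        q * p s
        + (∑ r, qr r * (p s * (kdelta s r - p r)))
        + (∑ u, ∑ t, Q u t * (p s *
            ((kdelta s u - p u) * (kdelta s t - p t) - p u * (kdelta u t - p t)))) = 0) :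
    q = 0 := by
  set k : Fin K := ⟨0, hK⟩ with hk
  set p : Fin K → ℝ := fun i => if i = k then 1 else 0 with hp
  have hpk : p k = 1 := by simp [hp]
  have hp0 : ∀ i, i ≠ k → p i = 0 := by intro i hi; simp [hp, hi]
  have hnn : ∀ i, 0 ≤ p i := by
    intro i
    by_cases h : i = k
    · rw [h, hpk]; norm_num
    · rw [hp0 i h]
  have hsum : (∑ i, p i) = 1 := by simp [hp]
  have hdiff : ∀ r : Fin K, kdelta k r - p r = 0 := by
    intro r
    by_cases h : r = k
    · subst h; rw [hpk, kd_eq]; ring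
    · rw [hp0 r h, kd_ne k r (Ne.symm h)]; ring
  have H := hid p hnn hsum k
  have e1 : (∑ r, qr r * (p k * (kdelta k r - p r))) = 0 := by
    apply Finset.sum_eq_zero
    intro r _
    rw [hdiff r]; ring
  have e2 : (∑ u, ∑ t, Q u t * (p k *
      ((kdelta k u - p u) * (kdelta k t - p t) - p u * (kdelta u t - p t)))) = 0 := by
    apply Finset.sum_eq_zero
    intro u _
    apply Finset.sum_eq_zero
    intro t _
    by_cases hu : u = k
    · rw [hu, hdiff k, hdiff t, hpk]; ring
    · rw [hdiff u, hp0 u hu]; ring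
  rw [e1, e2, hpk] at H
  linarith

lemma key (K : ℕ)
    (q : ℝ) (qr : Fin K → ℝ) (Q : Fin K → Fin K → ℝ)
    (hid : ∀ p : Fin K → ℝ, (∀ i, 0 ≤ p i) → (∑ i, p i) = 1 →
      ∀ s : Fin K,
        q * p s
        + (∑ r, qr r * (p s * (kdelta s r - p r)))
        + (∑ u, ∑ t, Q u t * (p s *
            ((kdelta s u - p u) * (kdelta s t - p t) - p u * (kdelta u t - p t)))) = 0)
    (a b : Fin K) (hab : a ≠ b) (x y : ℝ)
    (hx : 0 ≤ x) (hy : 0 ≤ y) (hxy : x + y = 1) :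
    q * x + x * y * (qr a - qr b)
      + x * y * (y - x) * (Q a a - Q a b - Q b a + Q b b) = 0 := by
  have hba : b ≠ a := Ne.symm hab
  set p : Fin K → ℝ := fun i => if i = a then x else if i = b then y else 0 with hp
  have hpa : p a = x := by simp [hp]
  have hpb : p b = y := by simp [hp, hba]
  have hp0 : ∀ i, i ≠ a → i ≠ b → p i = 0 := by
    intro i hia hib; simp [hp, hia, hib]
  have hnn : ∀ i, 0 ≤ p i := by
    intro i
    by_cases h1 : i = a
    · rw [h1, hpa]; exact hx
    · by_cases h2 : i = b
      · rw [h2, hpb]; exact hy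
      · rw [hp0 i h1 h2]
  have hsum : (∑ i, p i) = 1 := by
    have hsplit : ∀ i, p i = (if i = a then x else 0) + (if i = b then y else 0) := by
      intro i
      by_cases h1 : i = a
      · subst h1; simp [hp, hab]
      · by_cases h2 : i = b <;> simp [hp, h1, h2, hba]
    rw [Finset.sum_congr rfl (fun i _ => hsplit i), Finset.sum_add_distrib,
      Finset.sum_ite_eq' Finset.univ a (fun _ => x),
      Finset.sum_ite_eq' Finset.univ b (fun _ => y)]
    simpa using hxy
  have H := hid p hnn hsum a
  have e1 : (∑ r, qr r * (p a * (kdelta a r - p r)))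
      = qr a * (p a * (kdelta a a - p a)) + qr b * (p a * (kdelta a b - p b)) := by
    apply sum_two a b hab
    intro i hia hib
    rw [kd_ne a i (Ne.symm hia), hp0 i hia hib]; ring
  rw [e1] at H
  have inner : ∀ u, (∑ t, Q u t * (p a *
      ((kdelta a u - p u) * (kdelta a t - p t) - p u * (kdelta u t - p t))))
      = Q u a * (p a * ((kdelta a u - p u) * (kdelta a a - p a) - p u * (kdelta u a - p a)))
      + Q u b * (p a * ((kdelta a u - p u) * (kdelta a b - p b) - p u * (kdelta u b - p b))) := by
    intro u
    apply sum_two a b hab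
    intro t hta htb
    rw [kd_ne a t (Ne.symm hta), hp0 t hta htb]
    by_cases hu : u = a
    · rw [hu, kd_ne a t (Ne.symm hta)]; ring
    · by_cases hub : u = b
      · rw [hub, kd_ne b t (Ne.symm htb)]; ring
      · rw [hp0 u hu hub]; ring
  simp only [inner] at H
  have outer : (∑ u, (Q u a * (p a * ((kdelta a u - p u) * (kdelta a a - p a) - p u * (kdelta u a - p a)))
      + Q u b * (p a * ((kdelta a u - p u) * (kdelta a b - p b) - p u * (kdelta u b - p b)))))
      = (Q a a * (p a * ((kdelta a a - p a) * (kdelta a a - p a) - p a * (kdelta a a - p a)))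
      + Q a b * (p a * ((kdelta a a - p a) * (kdelta a b - p b) - p a * (kdelta a b - p b))))
      + (Q b a * (p a * ((kdelta a b - p b) * (kdelta a a - p a) - p b * (kdelta b a - p a)))
      + Q b b * (p a * ((kdelta a b - p b) * (kdelta a b - p b) - p b * (kdelta b b - p b)))) := by
    apply sum_two a b hab
    intro u hua hub
    rw [kd_ne a u (Ne.symm hua), hp0 u hua hub]; ring
  rw [outer] at H
  rw [hpa, hpb, kd_eq a, kd_eq b, kd_ne a b hab, kd_ne b a hba] at H
  have hyx : y = 1 - x := by linarith
  subst hyx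
  linear_combination H

/-- Lemma A.1 (quadratic independency). -/
theorem quadratic_independency (K : ℕ) (hK : 1 ≤ K)
    (q : ℝ) (qr : Fin K → ℝ) (Q : Fin K → Fin K → ℝ)
    (hsymm : ∀ u t : Fin K, Q u t = Q t u)
    (hid : ∀ p : Fin K → ℝ, (∀ i, 0 ≤ p i) → (∑ i, p i) = 1 →
      ∀ s : Fin K,
        q * p s
        + (∑ r, qr r * (p s * (kdelta s r - p r)))
        + (∑ u, ∑ t, Q u t * (p s *
            ((kdelta s u - p u) * (kdelta s t - p t) - p u * (kdelta u t - p t)))) = 0) :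
    q = 0 ∧ (∀ r s : Fin K, qr r = qr s) ∧
      (∀ u v : Fin K, 2 * Q u v = Q u u + Q v v) := by
  have hq : q = 0 := qzero K hK q qr Q hid
  have hqr : ∀ r s : Fin K, qr r = qr s := by
    intro r s
    by_cases h : r = s
    · rw [h]
    · have H := key K q qr Q hid r s h (1/2) (1/2) (by norm_num) (by norm_num) (by norm_num)
      rw [hq] at H
      linarith
  refine ⟨hq, hqr, ?_⟩
  intro u v
  by_cases h : u = v
  · rw [h]; ring
  · have H := key K q qr Q hid u v h (2/3) (1/3) (by norm_num) (by norm_num) (by norm_num)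
    rw [hq, hqr u v, hsymm u v] at H
    rw [hsymm u v]
    linarith
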